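/- Let γ : [0,c] → X be a C² regular curve in a two-dimensional normed plane with smooth strictly convex unit circle, parametrized by arc length, with nonvanishing circular curvature. If all left-normal lines of γ (the lines through γ(s) in the direction φ(t(s)), where φ'(t(s)) = γ'(s) for the arc-length parametrized unit circle φ) pass through a common point p, then γ has constant circular curvature, i.e., γ is contained in a Minkowski circle centered at p. -/

import Mathlib

open Set Filter Topology

/-- If all left-normal lines of a regular arc-length parametrized
curve γ (with nonvanishing circular curvature) in a strictly convex normed plane
pass through a common point p, then γ has constant circular curvature and is
contained in a Minkowski circle centered at p. Here φ is an arc-length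
parametrization of the unit circle, γ'(s) = φ'(t(s)), and k_c(s) = t'(s). -/
theorem stmt_10 {X : Type*} [NormedAddCommGroup X] [NormedSpace ℝ X]
    [StrictConvexSpace ℝ X] (hdim : Module.finrank ℝ X = 2)
    (c : ℝ) (hc : 0 < c)
    (φ : ℝ → X) (φd : ℝ → X)
    (hφ : ∀ u, ‖φ u‖ = 1) (hφd : ∀ u, HasDerivAt φ (φd u) u)
    (hφarc : ∀ u, ‖φd u‖ = 1)
    (γ : ℝ → X) (t kc : ℝ → ℝ)
    (ht : ∀ s, HasDerivAt t (kc s) s)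
    (hkc : ∀ s, kc s ≠ 0)
    (hγ : ∀ s, HasDerivAt γ (φd (t s)) s)
    (p : X)
    (hnormal : ∀ s ∈ Set.Icc (0:ℝ) c, ∃ r : ℝ, γ s = p + r • φ (t s)) :
    (∀ s₁ ∈ Set.Icc (0:ℝ) c, ∀ s₂ ∈ Set.Icc (0:ℝ) c, kc s₁ = kc s₂) ∧
      ∃ R : ℝ, ∀ s ∈ Set.Icc (0:ℝ) c, ‖γ s - p‖ = R := by
  classical
  -- dual functional with ℓ (φ u) = 1, ℓ (φd u) = 0
  have key : ∀ u : ℝ, ∃ ℓ : X →L[ℝ] ℝ, ℓ (φ u) = 1 ∧ ℓ (φd u) = 0 := by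
    intro u
    have hne : φ u ≠ 0 := by
      intro h
      have := hφ u
      rw [h, norm_zero] at this
      norm_num at this
    obtain ⟨ℓ, hℓ1, hℓx⟩ := exists_dual_vector ℝ (φ u) (norm_ne_zero_iff.mpr hne)
    have hℓφ : ℓ (φ u) = 1 := by simpa [hφ u] using hℓx
    refine ⟨ℓ, hℓφ, ?_⟩
    have hmax : IsLocalMax (fun v => ℓ (φ v)) u := by
      apply Filter.Eventually.of_forall
      intro v
      have h1 : ℓ (φ v) ≤ |ℓ (φ v)| := le_abs_self _
      have h2 : |ℓ (φ v)| ≤ ‖ℓ‖ * ‖φ v‖ := ℓ.le_opNorm _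
      simp only [hℓ1, hφ v, one_mul] at h2
      simp only [hℓφ]
      linarith
    have hd : HasDerivAt (fun v => ℓ (φ v)) (ℓ (φd u)) u :=
      ℓ.hasFDerivAt.comp_hasDerivAt u (hφd u)
    exact hmax.hasDerivAt_eq_zero hd
  have hφdne : ∀ u : ℝ, φd u ≠ 0 := by
    intro u h
    have := hφarc u
    rw [h, norm_zero] at this
    norm_num at this
  -- choose the radius function
  have hnormal' : ∀ s : ℝ, ∃ rs : ℝ, s ∈ Icc (0:ℝ) c → γ s - p = rs • φ (t s) := by
    intro s
    by_cases hs : s ∈ Icc (0:ℝ) c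
    · obtain ⟨rs, hrs⟩ := hnormal s hs
      exact ⟨rs, fun _ => by rw [hrs]; abel⟩
    · exact ⟨0, fun h => absurd h hs⟩
  choose r hr using hnormal'
  have hφt : ∀ s, HasDerivAt (fun s => φ (t s)) (kc s • φd (t s)) s :=
    fun s => (hφd (t s)).scomp s (ht s)
  -- main local claim
  have claim : ∀ s₀ ∈ Icc (0:ℝ) c, kc s₀ * r s₀ = 1 ∧
      ∃ U : Set ℝ, IsOpen U ∧ s₀ ∈ U ∧ ∃ ρ : ℝ → ℝ, HasDerivAt ρ 0 s₀ ∧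
        ∀ s ∈ U ∩ Icc (0:ℝ) c, r s = ρ s := by
    intro s₀ hs₀
    obtain ⟨ℓ, hℓ1, hℓ0⟩ := key (t s₀)
    have hB : ∀ s, HasDerivAt (fun s => ℓ (φ (t s))) (kc s * ℓ (φd (t s))) s := by
      intro s
      have h := ℓ.hasFDerivAt.comp_hasDerivAt s (hφt s)
      simp only [map_smul, smul_eq_mul] at h
      exact h
    have hA : ∀ s, HasDerivAt (fun s => ℓ (γ s - p)) (ℓ (φd (t s))) s := by
      intro s
      exact ℓ.hasFDerivAt.comp_hasDerivAt s ((hγ s).sub_const p)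
    have hBcont : Continuous fun s => ℓ (φ (t s)) :=
      continuous_iff_continuousAt.2 fun s => (hB s).continuousAt
    set U : Set ℝ := {s | ℓ (φ (t s)) ≠ 0} with hUdef
    have hUopen : IsOpen U := isOpen_compl_singleton.preimage hBcont
    have hsU : s₀ ∈ U := by
      show ℓ (φ (t s₀)) ≠ 0
      rw [hℓ1]; norm_num
    set ρ : ℝ → ℝ := fun s => ℓ (γ s - p) / ℓ (φ (t s)) with hρdef
    have hBne : ℓ (φ (t s₀)) ≠ 0 := by rw [hℓ1]; norm_num
    have hρd := (hA s₀).div (hB s₀) hBne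
    have hρ0 : HasDerivAt ρ 0 s₀ := by
      have h0 : (ℓ (φd (t s₀)) * ℓ (φ (t s₀)) - ℓ (γ s₀ - p) * (kc s₀ * ℓ (φd (t s₀)))) /
          ℓ (φ (t s₀)) ^ 2 = 0 := by
        rw [hℓ0]
        ring
      rw [h0] at hρd
      exact hρd
    have heq : ∀ s ∈ U ∩ Icc (0:ℝ) c, r s = ρ s := by
      rintro s ⟨hsU', hsI⟩
      have h1 : ℓ (γ s - p) = r s * ℓ (φ (t s)) := by
        rw [hr s hsI, map_smul, smul_eq_mul]
      have hBne' : ℓ (φ (t s)) ≠ 0 := hsU'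
      show r s = ℓ (γ s - p) / ℓ (φ (t s))
      rw [h1, mul_div_assoc, div_self hBne', mul_one]
    -- derivative of h := γ - p - ρ • (φ ∘ t) at s₀
    have hD : HasDerivAt (fun s => γ s - p - ρ s • φ (t s))
        (φd (t s₀) - (ρ s₀ • kc s₀ • φd (t s₀) + (0:ℝ) • φ (t s₀))) s₀ :=
      ((hγ s₀).sub_const p).sub (hρ0.smul (hφt s₀))
    have hset : UniqueDiffWithinAt ℝ (Icc (0:ℝ) c ∩ U) s₀ :=
      (uniqueDiffOn_Icc hc s₀ hs₀).inter (hUopen.mem_nhds hsU)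
    have hzero : ∀ s ∈ Icc (0:ℝ) c ∩ U, γ s - p - ρ s • φ (t s) = 0 := by
      rintro s ⟨hsI, hsU'⟩
      rw [← heq s ⟨hsU', hsI⟩, hr s hsI, sub_self]
    have hDW : HasDerivWithinAt (fun s => γ s - p - ρ s • φ (t s))
        (φd (t s₀) - (ρ s₀ • kc s₀ • φd (t s₀) + (0:ℝ) • φ (t s₀)))
        (Icc (0:ℝ) c ∩ U) s₀ := hD.hasDerivWithinAt
    have h0W : HasDerivWithinAt (fun s => γ s - p - ρ s • φ (t s)) (0:X)
        (Icc (0:ℝ) c ∩ U) s₀ :=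
      (hasDerivWithinAt_const s₀ _ (0:X)).congr hzero (hzero s₀ ⟨hs₀, hsU⟩)
    have hDeq : φd (t s₀) - (ρ s₀ • kc s₀ • φd (t s₀) + (0:ℝ) • φ (t s₀)) = 0 :=
      (hDW.derivWithin hset).symm.trans (h0W.derivWithin hset)
    have hcoef : (1 - ρ s₀ * kc s₀) • φd (t s₀) = 0 := by
      rw [sub_smul, one_smul, mul_smul]
      rw [zero_smul, add_zero] at hDeq
      exact hDeq
    have h1 : 1 - ρ s₀ * kc s₀ = 0 := by
      rcases smul_eq_zero.1 hcoef with h | h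
      · exact h
      · exact absurd h (hφdne (t s₀))
    have hrρ : r s₀ = ρ s₀ := heq s₀ ⟨hsU, hs₀⟩
    constructor
    · rw [hrρ]; linarith
    · exact ⟨U, hUopen, hsU, ρ, hρ0, heq⟩
  -- r is continuous on Icc
  have hcont : ContinuousOn r (Icc (0:ℝ) c) := by
    intro s₀ hs₀
    obtain ⟨-, U, hUo, hsU, ρ, hρ, heq⟩ := claim s₀ hs₀
    have hev : r =ᶠ[𝓝[Icc (0:ℝ) c] s₀] ρ := by
      filter_upwards [nhdsWithin_le_nhds (hUo.mem_nhds hsU), self_mem_nhdsWithin] with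
        y hyU hyI using heq y ⟨hyU, hyI⟩
    exact (hρ.continuousAt.continuousWithinAt).congr_of_eventuallyEq hev
      (heq s₀ ⟨hsU, hs₀⟩)
  -- right derivative of r is zero
  have hright : ∀ s ∈ Ico (0:ℝ) c, HasDerivWithinAt r 0 (Ici s) s := by
    intro s hs
    obtain ⟨-, U, hUo, hsU, ρ, hρ, heq⟩ := claim s ⟨hs.1, hs.2.le⟩
    have hev : r =ᶠ[𝓝[Ici s] s] ρ := by
      filter_upwards [nhdsWithin_le_nhds (hUo.mem_nhds hsU),
        nhdsWithin_le_nhds (Iio_mem_nhds hs.2), self_mem_nhdsWithin] with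
        y hyU hyc hys using heq y ⟨hyU, le_trans hs.1 hys, le_of_lt hyc⟩
    exact (hρ.hasDerivWithinAt).congr_of_eventuallyEq hev
      (heq s ⟨hsU, hs.1, hs.2.le⟩)
  have hconst := constant_of_has_deriv_right_zero hcont hright
  have hr0 : r 0 ≠ 0 := by
    intro h
    have k := (claim 0 ⟨le_refl 0, hc.le⟩).1
    rw [h, mul_zero] at k
    norm_num at k
  constructor
  · intro s₁ h₁ s₂ h₂
    have k₁ := (claim s₁ h₁).1
    have k₂ := (claim s₂ h₂).1
    rw [hconst s₁ h₁] at k₁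
    rw [hconst s₂ h₂] at k₂
    exact mul_right_cancel₀ hr0 (k₁.trans k₂.symm)
  · refine ⟨|r 0|, fun s hs => ?_⟩
    rw [hr s hs, norm_smul, hφ, mul_one, hconst s hs, Real.norm_eq_abs]
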